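/- Let X_n denote the set of complex roots of Littlewood polynomials with exactly n nonzero terms (i.e., of degree n-1). If n divides m, then X_n is contained in X_m. -/

import Mathlib

/-- The set of roots of Littlewood polynomials with exactly `n` nonzero terms,
i.e. of degree `n - 1`. -/
def littlewoodRoots (n : ℕ) : Set ℂ :=
  {z | ∃ a : ℕ → ℂ, (∀ i < n, a i = 1 ∨ a i = -1) ∧
    ∑ i ∈ Finset.range n, a i * z ^ i = 0}

theorem littlewoodRoots_subset_of_dvd (n m : ℕ) (hn : 0 < n) (h : n ∣ m) :
    littlewoodRoots n ⊆ littlewoodRoots m := by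
  rintro z ⟨a, ha, hsum⟩
  obtain ⟨k, rfl⟩ := h
  refine ⟨fun i => a (i % n), fun i _ => ha _ (Nat.mod_lt _ hn), ?_⟩
  induction k with
  | zero => simp
  | succ k ih =>
    rw [Nat.mul_succ, Finset.sum_range_add, ih, zero_add]
    calc ∑ j ∈ Finset.range n, a ((n * k + j) % n) * z ^ (n * k + j)
        = ∑ j ∈ Finset.range n, z ^ (n * k) * (a j * z ^ j) := by
          refine Finset.sum_congr rfl fun j hj => ?_
          rw [Nat.mul_add_mod, Nat.mod_eq_of_lt (Finset.mem_range.mp hj), pow_add]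
          ring
      _ = 0 := by rw [← Finset.mul_sum, hsum, mul_zero]
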